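/- arXiv:2105.00208 — 2 statements merged into one kernel-verified Lean document; each statement's English description precedes it below -/
import Mathlib

section
/- Termination characterizes acceptance of the empty trace: for any interaction term i, the inductive termination predicate i↓ holds if and only if ε ∈ σ_d(i), where σ_d is the denotational trace semantics. -/
universe u v
variable {A : Type u} {L : Type v}

/-- Trace `t` has a conflict with lifeline `l`: it contains an action occurring on `l`. -/
def Conflict (θ : A → L) (t : List A) (l : L) : Prop := ∃ a ∈ t, θ a = l

/-- `Interl t1 t2 t` : `t` is an interleaving of traces `t1` and `t2`. -/
inductive Interl : List A → List A → List A → Prop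
  | nil_left (t : List A) : Interl [] t t
  | nil_right (t : List A) : Interl t [] t
  | cons_left (a : A) {t1 t2 t : List A} : Interl t1 t2 t → Interl (a :: t1) t2 (a :: t)
  | cons_right (a : A) {t1 t2 t : List A} : Interl t1 t2 t → Interl t1 (a :: t2) (a :: t)

/-- `WeakSeq θ t1 t2 t` : `t` is a weak sequencing of `t1` and `t2`. -/
inductive WeakSeq (θ : A → L) : List A → List A → List A → Prop
  | nil_left (t : List A) : WeakSeq θ [] t t
  | nil_right (t : List A) : WeakSeq θ t [] t
  | cons_left (a : A) {t1 t2 t : List A} : WeakSeq θ t1 t2 t → WeakSeq θ (a :: t1) t2 (a :: t)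
  | cons_right (a : A) {t1 t2 t : List A} : WeakSeq θ t1 t2 t → ¬ Conflict θ t1 (θ a) →
      WeakSeq θ t1 (a :: t2) (a :: t)

/-- Interleaving of sets of traces. -/
def interlS (T1 T2 : Set (List A)) : Set (List A) :=
  {t | ∃ t1 ∈ T1, ∃ t2 ∈ T2, Interl t1 t2 t}

/-- Weak sequencing of sets of traces. -/
def weakS (θ : A → L) (T1 T2 : Set (List A)) : Set (List A) :=
  {t | ∃ t1 ∈ T1, ∃ t2 ∈ T2, WeakSeq θ t1 t2 t}

/-- Strict sequencing (concatenation) of sets of traces. -/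
def concatS (T1 T2 : Set (List A)) : Set (List A) :=
  {t | ∃ t1 ∈ T1, ∃ t2 ∈ T2, t = t1 ++ t2}

/-- Restricted version of a scheduling operator: the first action must come from the left. -/
def restr (op : Set (List A) → Set (List A) → Set (List A)) (T1 T2 : Set (List A)) :
    Set (List A) :=
  {t | t ∈ op T1 T2 ∧ ∀ a t', t = a :: t' → ∃ t1, a :: t1 ∈ T1 ∧ t ∈ op {t1} T2}

/-- Powers of a set of traces w.r.t. a scheduling operator. -/
def power (op : Set (List A) → Set (List A) → Set (List A)) (T : Set (List A)) :
    ℕ → Set (List A)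
  | 0 => {[]}
  | n + 1 => op T (power op T n)

/-- Kleene closure of a set of traces w.r.t. a scheduling operator. -/
def kleene (op : Set (List A) → Set (List A) → Set (List A)) (T : Set (List A)) :
    Set (List A) :=
  ⋃ n, power op T n

/-- Interaction terms. -/
inductive Interaction (A : Type u) : Type u
  | empty : Interaction A
  | act : A → Interaction A
  | strict : Interaction A → Interaction A → Interaction A
  | seq : Interaction A → Interaction A → Interaction A
  | par : Interaction A → Interaction A → Interaction A
  | alt : Interaction A → Interaction A → Interaction A
  | loopX : Interaction A → Interaction A
  | loopH : Interaction A → Interaction A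
  | loopS : Interaction A → Interaction A
  | loopP : Interaction A → Interaction A

/-- Denotational semantics of interactions. -/
def sem (θ : A → L) : Interaction A → Set (List A)
  | .empty => {[]}
  | .act a => {[a]}
  | .strict i1 i2 => concatS (sem θ i1) (sem θ i2)
  | .seq i1 i2 => weakS θ (sem θ i1) (sem θ i2)
  | .par i1 i2 => interlS (sem θ i1) (sem θ i2)
  | .alt i1 i2 => sem θ i1 ∪ sem θ i2
  | .loopX i1 => kleene concatS (sem θ i1)
  | .loopH i1 => kleene (restr (weakS θ)) (sem θ i1)
  | .loopS i1 => kleene (weakS θ) (sem θ i1)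
  | .loopP i1 => kleene interlS (sem θ i1)

/-- Termination predicate `i ↓`. -/
inductive Terminates : Interaction A → Prop
  | empty : Terminates .empty
  | alt_left {i1 i2 : Interaction A} : Terminates i1 → Terminates (.alt i1 i2)
  | alt_right {i1 i2 : Interaction A} : Terminates i2 → Terminates (.alt i1 i2)
  | strict {i1 i2 : Interaction A} : Terminates i1 → Terminates i2 → Terminates (.strict i1 i2)
  | seq {i1 i2 : Interaction A} : Terminates i1 → Terminates i2 → Terminates (.seq i1 i2)
  | par {i1 i2 : Interaction A} : Terminates i1 → Terminates i2 → Terminates (.par i1 i2)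
  | loopX (i1 : Interaction A) : Terminates (.loopX i1)
  | loopH (i1 : Interaction A) : Terminates (.loopH i1)
  | loopS (i1 : Interaction A) : Terminates (.loopS i1)
  | loopP (i1 : Interaction A) : Terminates (.loopP i1)

/-- Evasion predicate `i ↓w l`. -/
inductive Evades (θ : A → L) : Interaction A → L → Prop
  | empty (l : L) : Evades θ .empty l
  | act {a : A} {l : L} : θ a ≠ l → Evades θ (.act a) l
  | alt_left {i1 i2 : Interaction A} {l : L} : Evades θ i1 l → Evades θ (.alt i1 i2) l
  | alt_right {i1 i2 : Interaction A} {l : L} : Evades θ i2 l → Evades θ (.alt i1 i2) l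
  | strict {i1 i2 : Interaction A} {l : L} :
      Evades θ i1 l → Evades θ i2 l → Evades θ (.strict i1 i2) l
  | seq {i1 i2 : Interaction A} {l : L} :
      Evades θ i1 l → Evades θ i2 l → Evades θ (.seq i1 i2) l
  | par {i1 i2 : Interaction A} {l : L} :
      Evades θ i1 l → Evades θ i2 l → Evades θ (.par i1 i2) l
  | loopX (i1 : Interaction A) (l : L) : Evades θ (.loopX i1) l
  | loopH (i1 : Interaction A) (l : L) : Evades θ (.loopH i1) l
  | loopS (i1 : Interaction A) (l : L) : Evades θ (.loopS i1) l
  | loopP (i1 : Interaction A) (l : L) : Evades θ (.loopP i1) l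

/-- Pruning relation `i ⇝_l i'`. -/
inductive Prune (θ : A → L) (l : L) : Interaction A → Interaction A → Prop
  | empty : Prune θ l .empty .empty
  | act {a : A} : θ a ≠ l → Prune θ l (.act a) (.act a)
  | strict {i1 i2 i1' i2' : Interaction A} :
      Prune θ l i1 i1' → Prune θ l i2 i2' → Prune θ l (.strict i1 i2) (.strict i1' i2')
  | seq {i1 i2 i1' i2' : Interaction A} :
      Prune θ l i1 i1' → Prune θ l i2 i2' → Prune θ l (.seq i1 i2) (.seq i1' i2')
  | par {i1 i2 i1' i2' : Interaction A} :
      Prune θ l i1 i1' → Prune θ l i2 i2' → Prune θ l (.par i1 i2) (.par i1' i2')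
  | alt_both {i1 i2 i1' i2' : Interaction A} :
      Prune θ l i1 i1' → Prune θ l i2 i2' → Prune θ l (.alt i1 i2) (.alt i1' i2')
  | alt_left {i1 i2 i1' : Interaction A} :
      Prune θ l i1 i1' → ¬ Evades θ i2 l → Prune θ l (.alt i1 i2) i1'
  | alt_right {i1 i2 i2' : Interaction A} :
      Prune θ l i2 i2' → ¬ Evades θ i1 l → Prune θ l (.alt i1 i2) i2'
  | loopX {i1 i1' : Interaction A} : Prune θ l i1 i1' → Prune θ l (.loopX i1) (.loopX i1')
  | loopH {i1 i1' : Interaction A} : Prune θ l i1 i1' → Prune θ l (.loopH i1) (.loopH i1')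
  | loopS {i1 i1' : Interaction A} : Prune θ l i1 i1' → Prune θ l (.loopS i1) (.loopS i1')
  | loopP {i1 i1' : Interaction A} : Prune θ l i1 i1' → Prune θ l (.loopP i1) (.loopP i1')
  | loopX_elim {i1 : Interaction A} : ¬ Evades θ i1 l → Prune θ l (.loopX i1) .empty
  | loopH_elim {i1 : Interaction A} : ¬ Evades θ i1 l → Prune θ l (.loopH i1) .empty
  | loopS_elim {i1 : Interaction A} : ¬ Evades θ i1 l → Prune θ l (.loopS i1) .empty
  | loopP_elim {i1 : Interaction A} : ¬ Evades θ i1 l → Prune θ l (.loopP i1) .empty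

/-- Execution relation `i →a i'`. -/
inductive Exec (θ : A → L) : Interaction A → A → Interaction A → Prop
  | act (a : A) : Exec θ (.act a) a .empty
  | alt_left {i1 i2 i1' : Interaction A} {a : A} :
      Exec θ i1 a i1' → Exec θ (.alt i1 i2) a i1'
  | alt_right {i1 i2 i2' : Interaction A} {a : A} :
      Exec θ i2 a i2' → Exec θ (.alt i1 i2) a i2'
  | par_left {i1 i2 i1' : Interaction A} {a : A} :
      Exec θ i1 a i1' → Exec θ (.par i1 i2) a (.par i1' i2)
  | par_right {i1 i2 i2' : Interaction A} {a : A} :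
      Exec θ i2 a i2' → Exec θ (.par i1 i2) a (.par i1 i2')
  | strict_left {i1 i2 i1' : Interaction A} {a : A} :
      Exec θ i1 a i1' → Exec θ (.strict i1 i2) a (.strict i1' i2)
  | strict_right {i1 i2 i2' : Interaction A} {a : A} :
      Exec θ i2 a i2' → Terminates i1 → Exec θ (.strict i1 i2) a i2'
  | seq_left {i1 i2 i1' : Interaction A} {a : A} :
      Exec θ i1 a i1' → Exec θ (.seq i1 i2) a (.seq i1' i2)
  | seq_right {i1 i2 i1' i2' : Interaction A} {a : A} :
      Prune θ (θ a) i1 i1' → Exec θ i2 a i2' → Exec θ (.seq i1 i2) a (.seq i1' i2')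
  | loopX {i1 i1' : Interaction A} {a : A} :
      Exec θ i1 a i1' → Exec θ (.loopX i1) a (.strict i1' (.loopX i1))
  | loopH {i1 i1' : Interaction A} {a : A} :
      Exec θ i1 a i1' → Exec θ (.loopH i1) a (.seq i1' (.loopH i1))
  | loopS {i1 i1' i' : Interaction A} {a : A} :
      Exec θ i1 a i1' → Prune θ (θ a) (.loopS i1) i' →
      Exec θ (.loopS i1) a (.seq i' (.seq i1' (.loopS i1)))
  | loopP {i1 i1' : Interaction A} {a : A} :
      Exec θ i1 a i1' → Exec θ (.loopP i1) a (.par i1' (.loopP i1))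

/-- Operational semantics `σ_o`. -/
inductive SemO (θ : A → L) : Interaction A → List A → Prop
  | empty {i : Interaction A} : Terminates i → SemO θ i []
  | step {i i' : Interaction A} {a : A} {t : List A} :
      Exec θ i a i' → SemO θ i' t → SemO θ i (a :: t)

lemma interl_nil {t1 t2 : List A} (h : Interl t1 t2 []) : t1 = [] ∧ t2 = [] := by
  cases h <;> simp_all

lemma weakseq_nil {θ : A → L} {t1 t2 : List A} (h : WeakSeq θ t1 t2 []) :
    t1 = [] ∧ t2 = [] := by
  cases h <;> simp_all

theorem terminates_iff_nil_mem_sem {A : Type u} {L : Type v} (θ : A → L) (i : Interaction A) :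
    Terminates i ↔ ([] : List A) ∈ sem θ i := by
  induction i with
  | empty => simp [sem]; exact .empty
  | act a =>
    constructor
    · intro h; cases h
    · intro h; simp [sem] at h
  | strict i1 i2 ih1 ih2 =>
    constructor
    · intro h
      cases h with
      | strict h1 h2 => exact ⟨[], ih1.mp h1, [], ih2.mp h2, rfl⟩
    · rintro ⟨t1, h1, t2, h2, heq⟩
      obtain ⟨rfl, rfl⟩ := List.append_eq_nil_iff.mp heq.symm
      exact .strict (ih1.mpr h1) (ih2.mpr h2)
  | seq i1 i2 ih1 ih2 =>
    constructor
    · intro h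
      cases h with
      | seq h1 h2 => exact ⟨[], ih1.mp h1, [], ih2.mp h2, WeakSeq.nil_left []⟩
    · rintro ⟨t1, h1, t2, h2, hw⟩
      obtain ⟨rfl, rfl⟩ := weakseq_nil hw
      exact .seq (ih1.mpr h1) (ih2.mpr h2)
  | par i1 i2 ih1 ih2 =>
    constructor
    · intro h
      cases h with
      | par h1 h2 => exact ⟨[], ih1.mp h1, [], ih2.mp h2, Interl.nil_left []⟩
    · rintro ⟨t1, h1, t2, h2, hw⟩
      obtain ⟨rfl, rfl⟩ := interl_nil hw
      exact .par (ih1.mpr h1) (ih2.mpr h2)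
  | alt i1 i2 ih1 ih2 =>
    constructor
    · intro h
      cases h with
      | alt_left h1 => exact Or.inl (ih1.mp h1)
      | alt_right h2 => exact Or.inr (ih2.mp h2)
    · rintro (h | h)
      · exact .alt_left (ih1.mpr h)
      · exact .alt_right (ih2.mpr h)
  | loopX i1 ih => exact ⟨fun _ => Set.mem_iUnion.mpr ⟨0, rfl⟩, fun _ => .loopX i1⟩
  | loopH i1 ih => exact ⟨fun _ => Set.mem_iUnion.mpr ⟨0, rfl⟩, fun _ => .loopH i1⟩
  | loopS i1 ih => exact ⟨fun _ => Set.mem_iUnion.mpr ⟨0, rfl⟩, fun _ => .loopS i1⟩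
  | loopP i1 ih => exact ⟨fun _ => Set.mem_iUnion.mpr ⟨0, rfl⟩, fun _ => .loopP i1⟩
end

section
/- Pruning semantics: for any lifeline l and interaction terms i, i', if i ⇝_l i' then σ_d(i') = { t ∈ σ_d(i) | ¬(t ⋈ l) }, i.e. the pruned term accepts exactly the traces of i that contain no action on l. -/
universe u v
variable {A : Type u} {L : Type v}

section PruneAux
variable {A : Type u} {L : Type v}

lemma interl_mem {t1 t2 t : List A} (h : Interl t1 t2 t) (a : A) :
    a ∈ t ↔ a ∈ t1 ∨ a ∈ t2 := by
  induction h with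
  | nil_left t => simp
  | nil_right t => simp
  | cons_left b h ih => simp [ih]; tauto
  | cons_right b h ih => simp [ih]; tauto

lemma weakseq_mem {θ : A → L} {t1 t2 t : List A} (h : WeakSeq θ t1 t2 t) (a : A) :
    a ∈ t ↔ a ∈ t1 ∨ a ∈ t2 := by
  induction h with
  | nil_left t => simp
  | nil_right t => simp
  | cons_left b h ih => simp [ih]; tauto
  | cons_right b h _ ih => simp [ih]; tauto

lemma conflict_append {θ : A → L} {l : L} {t1 t2 : List A} :
    Conflict θ (t1 ++ t2) l ↔ Conflict θ t1 l ∨ Conflict θ t2 l := by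
  constructor
  · rintro ⟨a, ha, he⟩
    rcases List.mem_append.1 ha with h | h
    · exact Or.inl ⟨a, h, he⟩
    · exact Or.inr ⟨a, h, he⟩
  · rintro (⟨a, ha, he⟩ | ⟨a, ha, he⟩)
    · exact ⟨a, List.mem_append.2 (Or.inl ha), he⟩
    · exact ⟨a, List.mem_append.2 (Or.inr ha), he⟩

lemma conflict_interl {θ : A → L} {l : L} {t1 t2 t : List A} (h : Interl t1 t2 t) :
    Conflict θ t l ↔ Conflict θ t1 l ∨ Conflict θ t2 l := by
  simp only [Conflict]
  constructor
  · rintro ⟨a, ha, he⟩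
    rcases (interl_mem h a).1 ha with h' | h'
    · exact Or.inl ⟨a, h', he⟩
    · exact Or.inr ⟨a, h', he⟩
  · rintro (⟨a, ha, he⟩ | ⟨a, ha, he⟩)
    · exact ⟨a, (interl_mem h a).2 (Or.inl ha), he⟩
    · exact ⟨a, (interl_mem h a).2 (Or.inr ha), he⟩

lemma conflict_weakseq {θ : A → L} {l : L} {t1 t2 t : List A} (h : WeakSeq θ t1 t2 t) :
    Conflict θ t l ↔ Conflict θ t1 l ∨ Conflict θ t2 l := by
  simp only [Conflict]
  constructor
  · rintro ⟨a, ha, he⟩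
    rcases (weakseq_mem h a).1 ha with h' | h'
    · exact Or.inl ⟨a, h', he⟩
    · exact Or.inr ⟨a, h', he⟩
  · rintro (⟨a, ha, he⟩ | ⟨a, ha, he⟩)
    · exact ⟨a, (weakseq_mem h a).2 (Or.inl ha), he⟩
    · exact ⟨a, (weakseq_mem h a).2 (Or.inr ha), he⟩

/-- Conflict-free traces of a set. -/
def NC (θ : A → L) (l : L) (T : Set (List A)) : Set (List A) :=
  {t ∈ T | ¬ Conflict θ t l}

lemma evades_of_trace (θ : A → L) (l : L) :
    ∀ i : Interaction A, ∀ t ∈ sem θ i, ¬ Conflict θ t l → Evades θ i l := by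
  intro i
  induction i with
  | empty => intro t _ _; exact .empty l
  | act a =>
      intro t ht hc
      simp only [sem, Set.mem_singleton_iff] at ht
      subst ht
      exact .act fun he => hc ⟨a, by simp, he⟩
  | strict i1 i2 ih1 ih2 =>
      rintro t ⟨t1, h1, t2, h2, rfl⟩ hc
      rw [conflict_append] at hc
      push_neg at hc
      exact .strict (ih1 t1 h1 hc.1) (ih2 t2 h2 hc.2)
  | seq i1 i2 ih1 ih2 =>
      rintro t ⟨t1, h1, t2, h2, hw⟩ hc
      rw [conflict_weakseq hw] at hc
      push_neg at hc
      exact .seq (ih1 t1 h1 hc.1) (ih2 t2 h2 hc.2)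
  | par i1 i2 ih1 ih2 =>
      rintro t ⟨t1, h1, t2, h2, hw⟩ hc
      rw [conflict_interl hw] at hc
      push_neg at hc
      exact .par (ih1 t1 h1 hc.1) (ih2 t2 h2 hc.2)
  | alt i1 i2 ih1 ih2 =>
      rintro t (ht | ht) hc
      · exact .alt_left (ih1 t ht hc)
      · exact .alt_right (ih2 t ht hc)
  | loopX i1 _ => intro t _ _; exact .loopX i1 l
  | loopH i1 _ => intro t _ _; exact .loopH i1 l
  | loopS i1 _ => intro t _ _; exact .loopS i1 l
  | loopP i1 _ => intro t _ _; exact .loopP i1 l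

lemma NC_union (θ : A → L) (l : L) (T1 T2 : Set (List A)) :
    NC θ l (T1 ∪ T2) = NC θ l T1 ∪ NC θ l T2 := by
  ext t
  constructor
  · rintro ⟨h | h, hc⟩
    · exact Or.inl ⟨h, hc⟩
    · exact Or.inr ⟨h, hc⟩
  · rintro (⟨h, hc⟩ | ⟨h, hc⟩)
    · exact ⟨Or.inl h, hc⟩
    · exact ⟨Or.inr h, hc⟩

lemma NC_concat (θ : A → L) (l : L) (T1 T2 : Set (List A)) :
    NC θ l (concatS T1 T2) = concatS (NC θ l T1) (NC θ l T2) := by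
  ext t
  simp only [NC, concatS, Set.mem_sep_iff, Set.mem_setOf_eq]
  constructor
  · rintro ⟨⟨t1, h1, t2, h2, rfl⟩, hc⟩
    rw [conflict_append] at hc
    push_neg at hc
    exact ⟨t1, ⟨h1, hc.1⟩, t2, ⟨h2, hc.2⟩, rfl⟩
  · rintro ⟨t1, ⟨h1, hc1⟩, t2, ⟨h2, hc2⟩, rfl⟩
    exact ⟨⟨t1, h1, t2, h2, rfl⟩, by rw [conflict_append]; tauto⟩

lemma NC_weak (θ : A → L) (l : L) (T1 T2 : Set (List A)) :
    NC θ l (weakS θ T1 T2) = weakS θ (NC θ l T1) (NC θ l T2) := by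
  ext t
  simp only [NC, weakS, Set.mem_sep_iff, Set.mem_setOf_eq]
  constructor
  · rintro ⟨⟨t1, h1, t2, h2, hw⟩, hc⟩
    rw [conflict_weakseq hw] at hc
    push_neg at hc
    exact ⟨t1, ⟨h1, hc.1⟩, t2, ⟨h2, hc.2⟩, hw⟩
  · rintro ⟨t1, ⟨h1, hc1⟩, t2, ⟨h2, hc2⟩, hw⟩
    exact ⟨⟨t1, h1, t2, h2, hw⟩, by rw [conflict_weakseq hw]; tauto⟩

lemma NC_interl (θ : A → L) (l : L) (T1 T2 : Set (List A)) :
    NC θ l (interlS T1 T2) = interlS (NC θ l T1) (NC θ l T2) := by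
  ext t
  simp only [NC, interlS, Set.mem_sep_iff, Set.mem_setOf_eq]
  constructor
  · rintro ⟨⟨t1, h1, t2, h2, hw⟩, hc⟩
    rw [conflict_interl hw] at hc
    push_neg at hc
    exact ⟨t1, ⟨h1, hc.1⟩, t2, ⟨h2, hc.2⟩, hw⟩
  · rintro ⟨t1, ⟨h1, hc1⟩, t2, ⟨h2, hc2⟩, hw⟩
    exact ⟨⟨t1, h1, t2, h2, hw⟩, by rw [conflict_interl hw]; tauto⟩

lemma NC_restr_weak (θ : A → L) (l : L) (T1 T2 : Set (List A)) :
    NC θ l (restr (weakS θ) T1 T2) = restr (weakS θ) (NC θ l T1) (NC θ l T2) := by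
  ext t
  simp only [NC, restr, Set.mem_sep_iff, Set.mem_setOf_eq]
  constructor
  · rintro ⟨⟨h1, h2⟩, hc⟩
    constructor
    · have : t ∈ NC θ l (weakS θ T1 T2) := ⟨h1, hc⟩
      rwa [NC_weak] at this
    · rintro a t' rfl
      obtain ⟨t1, ht1, hw⟩ := h2 a t' rfl
      obtain ⟨s1, hs1, t2, ht2, hws⟩ := hw
      rw [Set.mem_singleton_iff] at hs1
      rw [hs1] at hws
      refine ⟨t1, ⟨ht1, ?_⟩, ⟨t1, rfl, t2, ⟨ht2, ?_⟩, hws⟩⟩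
      · rintro ⟨b, hb, he⟩
        rcases List.mem_cons.1 hb with rfl | hb
        · exact hc ⟨b, by simp, he⟩
        · exact hc ⟨b, (weakseq_mem hws b).2 (Or.inl hb), he⟩
      · rintro ⟨b, hb, he⟩
        exact hc ⟨b, (weakseq_mem hws b).2 (Or.inr hb), he⟩
  · rintro ⟨h1, h2⟩
    have h1' : t ∈ NC θ l (weakS θ T1 T2) := by
      rw [NC_weak]
      exact h1
    refine ⟨⟨h1'.1, ?_⟩, h1'.2⟩
    rintro a t' rfl
    obtain ⟨t1, ⟨ht1, _⟩, s1, hs1, t2, ⟨ht2, _⟩, hws⟩ := h2 a t' rfl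
    rw [Set.mem_singleton_iff] at hs1; subst hs1
    exact ⟨s1, ht1, s1, rfl, t2, ht2, hws⟩

lemma NC_power (θ : A → L) (l : L)
    (op : Set (List A) → Set (List A) → Set (List A))
    (hop : ∀ T1 T2, NC θ l (op T1 T2) = op (NC θ l T1) (NC θ l T2))
    (T : Set (List A)) : ∀ n, NC θ l (power op T n) = power op (NC θ l T) n
  | 0 => by
      ext t
      simp only [NC, power, Set.mem_sep_iff, Set.mem_singleton_iff]
      constructor
      · rintro ⟨rfl, _⟩; rfl
      · rintro rfl; exact ⟨rfl, by rintro ⟨a, ha, _⟩; simp at ha⟩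
  | n + 1 => by rw [power, power, hop, NC_power θ l op hop T n]

lemma NC_kleene (θ : A → L) (l : L)
    (op : Set (List A) → Set (List A) → Set (List A))
    (hop : ∀ T1 T2, NC θ l (op T1 T2) = op (NC θ l T1) (NC θ l T2))
    (T : Set (List A)) : NC θ l (kleene op T) = kleene op (NC θ l T) := by
  ext t
  constructor
  · rintro ⟨hk, hc⟩
    obtain ⟨n, hn⟩ := Set.mem_iUnion.1 hk
    refine Set.mem_iUnion.2 ⟨n, ?_⟩
    rw [← NC_power θ l op hop T n]
    exact ⟨hn, hc⟩
  · intro hk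
    obtain ⟨n, hn⟩ := Set.mem_iUnion.1 hk
    rw [← NC_power θ l op hop T n] at hn
    exact ⟨Set.mem_iUnion.2 ⟨n, hn.1⟩, hn.2⟩

lemma kleene_of_empty (op : Set (List A) → Set (List A) → Set (List A))
    (hemp : ∀ X, op (∅ : Set (List A)) X = ∅) :
    kleene op (∅ : Set (List A)) = {[]} := by
  ext t
  simp only [kleene, Set.mem_iUnion]
  constructor
  · rintro ⟨n, hn⟩
    cases n with
    | zero => exact hn
    | succ n => rw [power, hemp] at hn; exact absurd hn (Set.notMem_empty t)
  · rintro rfl; exact ⟨0, rfl⟩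

lemma NC_empty_of_not_evades {θ : A → L} {l : L} {i : Interaction A}
    (h : ¬ Evades θ i l) : NC θ l (sem θ i) = ∅ := by
  ext t
  simp only [NC, Set.mem_sep_iff, Set.mem_empty_iff_false, iff_false, not_and, not_not]
  intro ht
  by_contra hc
  exact h (evades_of_trace θ l i t ht hc)

lemma concat_empty (X : Set (List A)) : concatS (∅ : Set (List A)) X = ∅ := by
  ext t; simp [concatS]

lemma weak_empty (θ : A → L) (X : Set (List A)) : weakS θ (∅ : Set (List A)) X = ∅ := by
  ext t; simp [weakS]

lemma interl_empty (X : Set (List A)) : interlS (∅ : Set (List A)) X = ∅ := by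
  ext t; simp [interlS]

lemma restr_weak_empty (θ : A → L) (X : Set (List A)) :
    restr (weakS θ) (∅ : Set (List A)) X = ∅ := by
  ext t
  simp only [restr, Set.mem_setOf_eq, Set.mem_empty_iff_false, iff_false, not_and]
  intro h1
  rw [weak_empty] at h1
  exact absurd h1 (Set.notMem_empty t)

end PruneAux

theorem prune_sem {A : Type u} {L : Type v} (θ : A → L) (l : L)
    {i i' : Interaction A} (h : Prune θ l i i') :
    sem θ i' = {t ∈ sem θ i | ¬ Conflict θ t l} := by
  induction h with
  | empty =>
      ext t
      simp only [sem, Set.mem_sep_iff, Set.mem_singleton_iff]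
      constructor
      · rintro rfl; exact ⟨rfl, by rintro ⟨a, ha, _⟩; simp at ha⟩
      · rintro ⟨rfl, _⟩; rfl
  | act hne =>
      ext t
      simp only [sem, Set.mem_sep_iff, Set.mem_singleton_iff]
      constructor
      · rintro rfl
        refine ⟨rfl, ?_⟩
        rintro ⟨b, hb, he⟩
        simp only [List.mem_singleton] at hb
        subst hb
        exact hne he
      · rintro ⟨rfl, _⟩; rfl
  | strict _ _ ih1 ih2 =>
      show _ = NC θ l _
      simp only [sem, ih1, ih2]
      rw [NC_concat]; rfl
  | seq _ _ ih1 ih2 =>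
      show _ = NC θ l _
      simp only [sem, ih1, ih2]
      rw [NC_weak]; rfl
  | par _ _ ih1 ih2 =>
      show _ = NC θ l _
      simp only [sem, ih1, ih2]
      rw [NC_interl]; rfl
  | alt_both _ _ ih1 ih2 =>
      show _ = NC θ l _
      simp only [sem, ih1, ih2]
      rw [NC_union]; rfl
  | alt_left _ hev ih =>
      show _ = NC θ l _
      rw [ih]
      show NC θ l _ = _
      rw [show (sem θ (Interaction.alt _ _)) = _ ∪ _ from rfl, NC_union,
        NC_empty_of_not_evades hev, Set.union_empty]
  | alt_right _ hev ih =>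
      show _ = NC θ l _
      rw [ih]
      show NC θ l _ = _
      rw [show (sem θ (Interaction.alt _ _)) = _ ∪ _ from rfl, NC_union,
        NC_empty_of_not_evades hev, Set.empty_union]
  | loopX _ ih =>
      show kleene concatS (sem θ _) = NC θ l _
      rw [ih]
      show kleene concatS (NC θ l _) = _
      rw [← NC_kleene θ l concatS (NC_concat θ l)]
      rfl
  | loopH _ ih =>
      show kleene (restr (weakS θ)) (sem θ _) = NC θ l _
      rw [ih]
      show kleene (restr (weakS θ)) (NC θ l _) = _
      rw [← NC_kleene θ l (restr (weakS θ)) (NC_restr_weak θ l)]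
      rfl
  | loopS _ ih =>
      show kleene (weakS θ) (sem θ _) = NC θ l _
      rw [ih]
      show kleene (weakS θ) (NC θ l _) = _
      rw [← NC_kleene θ l (weakS θ) (NC_weak θ l)]
      rfl
  | loopP _ ih =>
      show kleene interlS (sem θ _) = NC θ l _
      rw [ih]
      show kleene interlS (NC θ l _) = _
      rw [← NC_kleene θ l interlS (NC_interl θ l)]
      rfl
  | loopX_elim hev =>
      show sem θ Interaction.empty = NC θ l _
      rw [show NC θ l (sem θ (Interaction.loopX _)) = _ from
        NC_kleene θ l concatS (NC_concat θ l) _, NC_empty_of_not_evades hev,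
        kleene_of_empty concatS concat_empty]
      rfl
  | loopH_elim hev =>
      show sem θ Interaction.empty = NC θ l _
      rw [show NC θ l (sem θ (Interaction.loopH _)) = _ from
        NC_kleene θ l (restr (weakS θ)) (NC_restr_weak θ l) _, NC_empty_of_not_evades hev,
        kleene_of_empty (restr (weakS θ)) (restr_weak_empty θ)]
      rfl
  | loopS_elim hev =>
      show sem θ Interaction.empty = NC θ l _
      rw [show NC θ l (sem θ (Interaction.loopS _)) = _ from
        NC_kleene θ l (weakS θ) (NC_weak θ l) _, NC_empty_of_not_evades hev,
        kleene_of_empty (weakS θ) (weak_empty θ)]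
      rfl
  | loopP_elim hev =>
      show sem θ Interaction.empty = NC θ l _
      rw [show NC θ l (sem θ (Interaction.loopP _)) = _ from
        NC_kleene θ l interlS (NC_interl θ l) _, NC_empty_of_not_evades hev,
        kleene_of_empty interlS interl_empty]
      rfl
end
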